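/- Let d ≥ 2 and let B ⊂ ℤ^d be a finite connected set containing 0 that is not contained in [-2n, 2n-1]^d. Define B_n = {z ∈ ℤ^d : (4nz + [-2n,2n-1]^d) ∩ B ≠ ∅}. Then B_n is a finite connected subset of ℤ^d and (4n)^d · #B_n ≥ #B. -/

import Mathlib

def norm1 {d : ℕ} (x : Fin d → ℤ) : ℕ := ∑ i, (x i).natAbs

def adj {d : ℕ} (x y : Fin d → ℤ) : Prop := norm1 (x - y) = 1

def IsPath {d : ℕ} (m : ℕ) (γ : Fin (m + 1) → Fin d → ℤ) : Prop :=
  ∀ i : Fin m, adj (γ i.castSucc) (γ i.succ)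

def Conn {d : ℕ} (S : Set (Fin d → ℤ)) : Prop :=
  S.Nonempty ∧ ∀ x ∈ S, ∀ y ∈ S, ∃ m γ, IsPath m γ ∧ (∀ i, γ i ∈ S) ∧
    γ 0 = x ∧ γ (Fin.last m) = y

/-- The covering of B by boxes of side 4n: B_n = {z : (4nz + [-2n,2n-1]^d) ∩ B ≠ ∅}. -/
def coverSet {d : ℕ} (n : ℕ) (B : Set (Fin d → ℤ)) : Set (Fin d → ℤ) :=
  {z | ∃ b ∈ B, ∀ i, -(2 * (n : ℤ)) ≤ b i - 4 * n * z i ∧ b i - 4 * n * z i ≤ 2 * n - 1}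

/-! ### Auxiliary lemmas -/

/-- The box map: `phi n b i = (b i + 2n) / (4n)` (euclidean division). -/
def phi (n : ℕ) {d : ℕ} (b : Fin d → ℤ) : Fin d → ℤ := fun i => (b i + 2 * n) / (4 * n)

private lemma ediv_sandwich (a q : ℤ) (hq : 0 < q) :
    0 ≤ a - q * (a / q) ∧ a - q * (a / q) ≤ q - 1 := by
  have h1 := Int.emod_nonneg a hq.ne'
  have h2 := Int.emod_lt_of_pos a hq
  have h3 := Int.mul_ediv_add_emod a q
  omega

private lemma ediv_unique (a q z : ℤ) (hq : 0 < q) (h1 : 0 ≤ a - q * z)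
    (h2 : a - q * z ≤ q - 1) : z = a / q := by
  have h3 := Int.mul_ediv_add_emod a q
  have h4 := Int.emod_nonneg a hq.ne'
  have h5 := Int.emod_lt_of_pos a hq
  rcases lt_trichotomy z (a / q) with h | h | h
  · exfalso
    have hle : q * z + q * 1 ≤ q * (a / q) := by
      rw [← mul_add]; exact mul_le_mul_of_nonneg_left (by omega) hq.le
    omega
  · exact h
  · exfalso
    have hle : q * (a / q) + q * 1 ≤ q * z := by
      rw [← mul_add]; exact mul_le_mul_of_nonneg_left (by omega) hq.le
    omega

private lemma ediv_succ_le (a q : ℤ) (hq : 0 < q) :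
    a / q ≤ (a + 1) / q ∧ (a + 1) / q ≤ a / q + 1 := by
  constructor
  · exact Int.ediv_le_ediv hq (by omega)
  · have h : (a + 1 * q) / q = a / q + 1 := Int.add_mul_ediv_right a 1 hq.ne'
    calc (a + 1) / q ≤ (a + 1 * q) / q := Int.ediv_le_ediv hq (by omega)
      _ = a / q + 1 := h

private lemma sum_nat_eq_one {d : ℕ} (f : Fin d → ℕ) (h : ∑ i, f i = 1) :
    ∃ j, f j = 1 ∧ ∀ k, k ≠ j → f k = 0 := by
  obtain ⟨j, -, hj⟩ : ∃ j ∈ Finset.univ, f j ≠ 0 :=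
    Finset.exists_ne_zero_of_sum_ne_zero (by omega)
  have hle : f j ≤ 1 := h ▸ Finset.single_le_sum (fun _ _ => Nat.zero_le _) (Finset.mem_univ j)
  refine ⟨j, by omega, fun k hk => ?_⟩
  have hpair : f j + f k ≤ ∑ i, f i := by
    have hsub := Finset.sum_le_sum_of_subset (f := f)
      (Finset.subset_univ ({j, k} : Finset (Fin d)))
    rwa [Finset.sum_pair (Ne.symm hk)] at hsub
  omega

/-- Adjacency means: one coordinate differs by 1, the rest agree. -/
private lemma adj_iff {d : ℕ} (x y : Fin d → ℤ) (h : adj x y) :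
    ∃ j, (x j - y j).natAbs = 1 ∧ ∀ k, k ≠ j → x k = y k := by
  have h' : ∑ i, (x i - y i).natAbs = 1 := by
    simpa [adj, norm1, Pi.sub_apply] using h
  obtain ⟨j, hj1, hj0⟩ := sum_nat_eq_one _ h'
  exact ⟨j, hj1, fun k hk => by have := hj0 k hk; omega⟩

private lemma phi_step {d n : ℕ} (hn : 1 ≤ n) (b b' : Fin d → ℤ) (h : adj b b') :
    phi n b = phi n b' ∨ adj (phi n b) (phi n b') := by
  have hq : (0 : ℤ) < 4 * n := by positivity
  obtain ⟨j, hj1, hj0⟩ := adj_iff b b' h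
  have heq : ∀ k, k ≠ j → phi n b k = phi n b' k := by
    intro k hk; simp [phi, hj0 k hk]
  have hjd : (phi n b j - phi n b' j).natAbs ≤ 1 := by
    have h1 := ediv_succ_le (b j + 2 * n) (4 * n) hq
    have h2 := ediv_succ_le (b' j + 2 * n) (4 * n) hq
    simp only [phi]
    rcases (by omega : b j = b' j + 1 ∨ b' j = b j + 1) with hc | hc
    · rw [hc]
      have : b' j + 1 + 2 * (n : ℤ) = b' j + 2 * n + 1 := by ring
      rw [this]; omega
    · rw [hc]
      have : b j + 1 + 2 * (n : ℤ) = b j + 2 * n + 1 := by ring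
      rw [this]; omega
  rcases (by omega : (phi n b j - phi n b' j).natAbs = 0 ∨
      (phi n b j - phi n b' j).natAbs = 1) with hc | hc
  · left
    funext k
    by_cases hk : k = j
    · subst hk; omega
    · exact heq k hk
  · right
    show norm1 _ = 1
    unfold norm1
    rw [Finset.sum_eq_single_of_mem j (Finset.mem_univ j)]
    · simpa using hc
    · intro k _ hk
      simp [Pi.sub_apply, heq k hk]

private lemma phi_mem_box {d n : ℕ} (hn : 1 ≤ n) (b : Fin d → ℤ) (i : Fin d) :
    -(2 * (n : ℤ)) ≤ b i - 4 * n * phi n b i ∧ b i - 4 * n * phi n b i ≤ 2 * n - 1 := by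
  have hq : (0 : ℤ) < 4 * n := by positivity
  have := ediv_sandwich (b i + 2 * n) (4 * n) hq
  simp only [phi]
  omega

private lemma cover_eq_image {d n : ℕ} (hn : 1 ≤ n) (B : Set (Fin d → ℤ)) :
    coverSet n B = phi n '' B := by
  have hq : (0 : ℤ) < 4 * n := by positivity
  ext z
  constructor
  · rintro ⟨b, hb, hbox⟩
    refine ⟨b, hb, ?_⟩
    funext i
    have h := hbox i
    exact (ediv_unique (b i + 2 * n) (4 * n) (z i) hq (by omega) (by omega)).symm
  · rintro ⟨b, hb, rfl⟩
    exact ⟨b, hb, phi_mem_box hn b⟩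

/-- A walk (steps adjacent or equal) through `S` can be converted into a path. -/
private lemma conn_of_walk {d : ℕ} (S : Set (Fin d → ℤ)) :
    ∀ m (γ : Fin (m + 1) → Fin d → ℤ),
      (∀ i : Fin m, adj (γ i.castSucc) (γ i.succ) ∨ γ i.castSucc = γ i.succ) →
      (∀ i, γ i ∈ S) →
      ∃ m' δ, IsPath m' δ ∧ (∀ i, δ i ∈ S) ∧ δ 0 = γ 0 ∧
        δ (Fin.last m') = γ (Fin.last m) := by
  intro m
  induction m with
  | zero =>
    intro γ _ hmem
    exact ⟨0, γ, fun i => i.elim0, hmem, rfl, rfl⟩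
  | succ m ih =>
    intro γ hstep hmem
    obtain ⟨m', δ, hδpath, hδmem, hδ0, hδlast⟩ := ih (fun i => γ i.succ)
      (fun i => by
        have := hstep i.succ
        rwa [← Fin.succ_castSucc] at this)
      (fun i => hmem i.succ)
    have hδ0' : δ 0 = γ 1 := by
      rw [hδ0]; simp [Fin.succ_zero_eq_one]
    have hδlast' : δ (Fin.last m') = γ (Fin.last (m + 1)) := by
      rw [hδlast]; simp [Fin.succ_last]
    rcases hstep 0 with hadj | heq
    · -- prepend γ 0
      refine ⟨m' + 1, Fin.cases (γ 0) δ, ?_, ?_, ?_, ?_⟩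
      · intro i
        induction i using Fin.cases with
        | zero =>
          simp only [Fin.castSucc_zero, Fin.cases_zero, Fin.succ_zero_eq_one]
          have h1 : (1 : Fin (m' + 2)) = (0 : Fin (m' + 1)).succ := by
            simp [Fin.succ_zero_eq_one]
          rw [h1, Fin.cases_succ, hδ0']
          simpa [Fin.castSucc_zero, Fin.succ_zero_eq_one] using hadj
        | succ j =>
          rw [← Fin.succ_castSucc]
          simp only [Fin.cases_succ]
          exact hδpath j
      · intro i
        induction i using Fin.cases with
        | zero => simpa using hmem 0
        | succ j => simpa using hδmem j
      · simp
      · rw [← Fin.succ_last]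
        simp only [Fin.cases_succ]
        exact hδlast'
    · -- γ 0 = γ 1, reuse δ
      refine ⟨m', δ, hδpath, hδmem, ?_, hδlast'⟩
      rw [hδ0']
      have : γ (0 : Fin (m + 1)).castSucc = γ (0 : Fin (m + 1)).succ := heq
      simpa [Fin.castSucc_zero, Fin.succ_zero_eq_one] using this.symm

/-- If B is a finite connected set containing 0, not contained in [-2n,2n-1]^d,
then B_n is finite, connected, and (4n)^d · #B_n ≥ #B. -/
theorem stmt4 (d n : ℕ) (hd : 2 ≤ d) (hn : 1 ≤ n)
    (B : Set (Fin d → ℤ)) (hBfin : B.Finite) (hBconn : Conn B)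
    (h0 : (0 : Fin d → ℤ) ∈ B)
    (hbig : ¬ ∀ x ∈ B, ∀ i, -(2 * (n : ℤ)) ≤ x i ∧ x i ≤ 2 * n - 1) :
    (coverSet n B).Finite ∧ Conn (coverSet n B) ∧
      B.ncard ≤ (4 * n) ^ d * (coverSet n B).ncard := by
  have hq : (0 : ℤ) < 4 * n := by positivity
  have hcov : coverSet n B = phi n '' B := cover_eq_image hn B
  have hfin : (coverSet n B).Finite := hcov ▸ hBfin.image _
  refine ⟨hfin, ?_, ?_⟩
  · -- connectivity
    rw [hcov]
    constructor
    · exact ⟨phi n 0, 0, h0, rfl⟩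
    · rintro x ⟨b, hb, rfl⟩ y ⟨b', hb', rfl⟩
      obtain ⟨m, γ, hγpath, hγmem, hγ0, hγlast⟩ := hBconn.2 b hb b' hb'
      obtain ⟨m', δ, h1, h2, h3, h4⟩ := conn_of_walk (phi n '' B) m (fun i => phi n (γ i))
        (fun i => (phi_step hn _ _ (hγpath i)).symm)
        (fun i => ⟨γ i, hγmem i, rfl⟩)
      exact ⟨m', δ, h1, h2, by rw [h3, hγ0], by rw [h4, hγlast]⟩
  · -- cardinality
    classical
    set F := hBfin.toFinset with hF
    set ψ : (Fin d → ℤ) → (Fin d → ℤ) × (Fin d → ℤ) :=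
      fun b => (phi n b, fun i => b i - 4 * n * phi n b i) with hψ
    have hinj : Set.InjOn ψ ↑F := by
      intro b _ b' _ hbb
      have h1 : phi n b = phi n b' := congrArg Prod.fst hbb
      have h2 : (fun i => b i - 4 * n * phi n b i) = fun i => b' i - 4 * n * phi n b' i :=
        congrArg Prod.snd hbb
      funext i
      have e1 := congrFun h2 i
      have e2 := congrFun h1 i
      rw [e2] at e1
      omega
    set G : Finset (Fin d → ℤ) :=
      Fintype.piFinset (fun _ : Fin d => Finset.Icc (-(2 * (n : ℤ))) (2 * n - 1)) with hG
    have hGcard : G.card = (4 * n) ^ d := by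
      have hc : (Finset.Icc (-(2 * (n : ℤ))) (2 * n - 1)).card = 4 * n := by
        rw [Int.card_Icc]; omega
      rw [hG, Fintype.card_piFinset]
      simp only [hc, Finset.prod_const, Finset.card_univ, Fintype.card_fin]
    have hsub : F.image ψ ⊆ (F.image (phi n)) ×ˢ G := by
      intro p hp
      obtain ⟨b, hb, rfl⟩ := Finset.mem_image.mp hp
      rw [Finset.mem_product]
      constructor
      · exact Finset.mem_image_of_mem _ hb
      · rw [hG, Fintype.mem_piFinset]
        intro i
        rw [Finset.mem_Icc]
        exact phi_mem_box hn b i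
    have hcount : F.card ≤ (F.image (phi n)).card * (4 * n) ^ d := by
      calc F.card = (F.image ψ).card := (Finset.card_image_of_injOn hinj).symm
        _ ≤ ((F.image (phi n)) ×ˢ G).card := Finset.card_le_card hsub
        _ = (F.image (phi n)).card * G.card := Finset.card_product _ _
        _ = (F.image (phi n)).card * (4 * n) ^ d := by rw [hGcard]
    have hcover_finset : coverSet n B = ↑(F.image (phi n)) := by
      rw [hcov, hF, Finset.coe_image, Set.Finite.coe_toFinset]
    have hBcard : B.ncard = F.card := by
      rw [hF, ← Set.ncard_coe_finset, Set.Finite.coe_toFinset]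
    rw [hBcard, hcover_finset, Set.ncard_coe_finset, mul_comm]
    exact hcount
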